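/- The axiom of infinity holds for well-founded extensional apgs: there exists a well-founded extensional apg Ω (on a type in a fixed universe) such that (i) some W ⋿ Ω has no members (∀ Z, ¬(Z ⋿ W)); (ii) for all well-founded extensional apgs W and S, if W ⋿ Ω and S is a successor of W then S ⋿ Ω; and (iii) for every well-founded extensional apg T satisfying the analogues of (i) and (ii) — namely, every well-founded extensional apg with no members satisfies ⋿ T, and whenever W ⋿ T and S is a successor of W then S ⋿ T — every W with W ⋿ Ω satisfies W ⋿ T. -/

import Mathlib

universe u v

/-- A relation is (inductively) well-founded if every inductive subset is the whole type:
`S` is inductive when `x ∈ S` whenever every child of `x` is in `S`. -/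
def IsWFRel {X : Type u} (r : X → X → Prop) : Prop :=
  ∀ S : Set X, (∀ x, (∀ y, r y x → y ∈ S) → x ∈ S) → S = Set.univ

/-- A relation is extensional if nodes with the same children are equal. -/
def IsExtRel {X : Type u} (r : X → X → Prop) : Prop :=
  ∀ x y, (∀ z, r z x ↔ r z y) → x = y

/-- `Below r x` is the full subgraph `X/x` of nodes admitting a (possibly empty) path to `x`. -/
def Below {X : Type u} (r : X → X → Prop) (x : X) : Type u :=
  {z : X // Relation.ReflTransGen r z x}

/-- The induced relation on the subgraph `X/x`. -/
def belowRel {X : Type u} (r : X → X → Prop) (x : X) :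
    Below r x → Below r x → Prop :=
  fun a b => r a.1 b.1

/-- The root of the pointed subgraph `X/x`. -/
def belowRoot {X : Type u} (r : X → X → Prop) (x : X) : Below r x :=
  ⟨x, Relation.ReflTransGen.refl⟩

/-- Isomorphism of pointed graphs: a relation-preserving-and-reflecting bijection
taking the first distinguished point to the second. -/
def PIso {X : Type u} {Y : Type v} (rX : X → X → Prop) (rY : Y → Y → Prop)
    (x : X) (y : Y) : Prop :=
  ∃ f : X ≃ Y, (∀ a b, rX a b ↔ rY (f a) (f b)) ∧ f x = y

/-- A simulation of graphs. -/
def IsSimulation {X : Type u} {Y : Type v} (rX : X → X → Prop)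
    (rY : Y → Y → Prop) (f : X → Y) : Prop :=
  (∀ a b, rX a b → rY (f a) (f b)) ∧
  (∀ x y, rY y (f x) → ∃ a, rX a x ∧ f a = y)

/-- A bisimulation between graphs. -/
def IsBisimulation {X : Type u} {Y : Type v} (rX : X → X → Prop)
    (rY : Y → Y → Prop) (R : X → Y → Prop) : Prop :=
  ∀ x y, R x y →
    (∀ x', rX x' x → ∃ y', rY y' y ∧ R x' y') ∧
    (∀ y', rY y' y → ∃ x', rX x' x ∧ R x' y')

/-- A bi-entire relation. -/
def BiEntire {X : Type u} {Y : Type v} (R : X → Y → Prop) : Prop :=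
  (∀ x, ∃ y, R x y) ∧ (∀ y, ∃ x, R x y)

/-- A well-founded extensional accessible pointed graph ("apg") on a type in universe `u`. -/
structure WEApg : Type (u + 1) where
  carrier : Type u
  rel : carrier → carrier → Prop
  root : carrier
  acc : ∀ x, Relation.ReflTransGen rel x root
  wf : IsWFRel rel
  ext : IsExtRel rel

/-- Isomorphism of (the underlying pointed graphs of) apgs. -/
def WEApg.Iso (X Y : WEApg.{u}) : Prop :=
  PIso X.rel Y.rel X.root Y.root

/-- Membership of the pointed graph `(W, rW, w)` in the pointed graph `(Y, rY, y)`: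
`(W, rW, w)` is isomorphic as a pointed graph to `(Y, rY)/z` for some child `z` of `y`. -/
def MemPGAt {W : Type u} {Y : Type v} (rW : W → W → Prop) (w : W)
    (rY : Y → Y → Prop) (y : Y) : Prop :=
  ∃ z, rY z y ∧ PIso rW (belowRel rY z) w (belowRoot rY z)

/-- `X ⋿ Y` for apgs: `X` is isomorphic as a pointed graph to `Y/y` for some member
(child of the root) `y` of `Y`. -/
def WEApg.Mem (X Y : WEApg.{u}) : Prop :=
  MemPGAt X.rel X.root Y.rel Y.root

/-- `S` is a successor of `W`: the members of `S` are the members of `W` together with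
`W` itself (up to isomorphism of pointed graphs). -/
def IsSuccOf (S W : WEApg.{u}) : Prop :=
  ∀ Z : WEApg.{u}, Z.Mem S ↔ (Z.Mem W ∨ Z.Iso W)

theorem isWFRel_iff {X : Type u} {r : X → X → Prop} :
    IsWFRel r ↔ WellFounded r := by
  constructor
  · intro h
    have := h {x | Acc r x} (fun x hx => Acc.intro x hx)
    exact ⟨fun x => by rw [Set.eq_univ_iff_forall] at this; exact this x⟩
  · intro h S hS
    rw [Set.eq_univ_iff_forall]
    intro x
    exact h.induction x (fun x ih => hS x ih)

noncomputable def collapseP {X : Type u} (r : X → X → Prop) (hw : WellFounded r) : X → PSet.{u} :=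
  hw.fix fun x ih => PSet.mk {y // r y x} fun y => ih y.1 y.2

theorem collapseP_eq {X : Type u} (r : X → X → Prop) (hw : WellFounded r) (x : X) :
    collapseP r hw x = PSet.mk {y // r y x} (fun y => collapseP r hw y.1) := by
  rw [collapseP, WellFounded.fix_eq]

noncomputable def collapse {X : Type u} (r : X → X → Prop) (hw : WellFounded r) (x : X) :
    ZFSet.{u} :=
  ZFSet.mk (collapseP r hw x)

theorem mem_collapse {X : Type u} {r : X → X → Prop} {hw : WellFounded r} {x : X}
    {u : ZFSet.{u}} :
    u ∈ collapse r hw x ↔ ∃ y, r y x ∧ u = collapse r hw y := by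
  refine Quotient.inductionOn u ?_
  intro p
  show ZFSet.mk p ∈ collapse r hw x ↔ _
  rw [collapse, collapseP_eq, ZFSet.mk_mem_iff]
  constructor
  · rintro ⟨a, ha⟩
    exact ⟨a.1, a.2, ZFSet.sound ha⟩
  · rintro ⟨y, hy, he⟩
    exact ⟨⟨y, hy⟩, ZFSet.exact he⟩

theorem collapse_inj {X : Type u} {r : X → X → Prop} {hw : WellFounded r}
    (hext : IsExtRel r) {x y : X}
    (h : collapse r hw x = collapse r hw y) : x = y := by
  induction x using hw.induction generalizing y with
  | _ x ih =>
    refine hext x y (fun z => ⟨fun hz => ?_, fun hz => ?_⟩)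
    · have : collapse r hw z ∈ collapse r hw y := by
        rw [← h]; exact mem_collapse.2 ⟨z, hz, rfl⟩
      obtain ⟨w, hw', he⟩ := mem_collapse.1 this
      rwa [ih z hz he]
    · have : collapse r hw z ∈ collapse r hw x := by
        rw [h]; exact mem_collapse.2 ⟨z, hz, rfl⟩
      obtain ⟨w, hw', he⟩ := mem_collapse.1 this
      rwa [← ih w hw' he.symm]

theorem collapse_iso {X : Type u} {Y : Type u} {rX : X → X → Prop} {rY : Y → Y → Prop}
    {hwX : WellFounded rX} {hwY : WellFounded rY}
    (f : X ≃ Y) (hf : ∀ a b, rX a b ↔ rY (f a) (f b)) (x : X) :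
    collapse rY hwY (f x) = collapse rX hwX x := by
  induction x using hwX.induction with
  | _ x ih =>
    refine ZFSet.ext fun u => ?_
    rw [mem_collapse, mem_collapse]
    constructor
    · rintro ⟨y, hy, he⟩
      refine ⟨f.symm y, (hf _ _).2 (by simpa using hy), ?_⟩
      rw [← ih (f.symm y) ((hf _ _).2 (by simpa using hy))]
      simpa using he
    · rintro ⟨a, ha, he⟩
      exact ⟨f a, (hf _ _).1 ha, by rw [he, ih a ha]⟩

theorem rtg_below {X : Type u} {r : X → X → Prop} {x : X} (a b : Below r x)
    (h : Relation.ReflTransGen r a.1 b.1) :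
    Relation.ReflTransGen (belowRel r x) a b := by
  obtain ⟨u, hu⟩ := a
  obtain ⟨v, hv⟩ := b
  simp only at h
  revert hv
  induction h with
  | refl => intro hv; exact Relation.ReflTransGen.refl
  | tail h' hmv ih =>
    intro hv
    exact (ih (hv.head hmv)).tail hmv

theorem below_acc {X : Type u} {r : X → X → Prop} {x : X} (b : Below r x) :
    Relation.ReflTransGen (belowRel r x) b (belowRoot r x) :=
  rtg_below b (belowRoot r x) b.2

theorem below_wf {X : Type u} {r : X → X → Prop} (hw : WellFounded r) (x : X) :
    WellFounded (belowRel r x) :=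
  InvImage.wf Subtype.val hw

theorem below_ext {X : Type u} {r : X → X → Prop} (hext : IsExtRel r) (x : X) :
    IsExtRel (belowRel r x) := by
  intro a b h
  refine Subtype.ext (hext a.1 b.1 fun z => ⟨fun hz => ?_, fun hz => ?_⟩)
  · exact (h ⟨z, a.2.head hz⟩).1 hz
  · exact (h ⟨z, b.2.head hz⟩).2 hz

theorem collapse_below {X : Type u} {r : X → X → Prop} {hw : WellFounded r} {x : X}
    (b : Below r x) :
    collapse (belowRel r x) (below_wf hw x) b = collapse r hw b.1 := by
  induction b using (below_wf hw x).induction with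
  | _ b ih =>
    refine ZFSet.ext fun u => ?_
    rw [mem_collapse, mem_collapse]
    constructor
    · rintro ⟨c, hc, he⟩
      exact ⟨c.1, hc, by rw [he, ih c hc]⟩
    · rintro ⟨w, hwb, he⟩
      refine ⟨⟨w, b.2.head hwb⟩, hwb, ?_⟩
      rw [ih ⟨w, b.2.head hwb⟩ hwb]
      exact he

theorem iso_of_collapse_eq {X : Type u} {Y : Type u} {rX : X → X → Prop} {rY : Y → Y → Prop}
    {hwX : WellFounded rX} {hwY : WellFounded rY}
    (hextX : IsExtRel rX) (hextY : IsExtRel rY) {x0 : X} {y0 : Y}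
    (haccX : ∀ a, Relation.ReflTransGen rX a x0)
    (haccY : ∀ b, Relation.ReflTransGen rY b y0)
    (h : collapse rX hwX x0 = collapse rY hwY y0) :
    PIso rX rY x0 y0 := by
  have ex : ∀ a, ∃ b, collapse rX hwX a = collapse rY hwY b := by
    intro a
    induction haccX a using Relation.ReflTransGen.head_induction_on with
    | refl => exact ⟨y0, h⟩
    | @head a c hac hcb ih =>
      obtain ⟨b, hb⟩ := ih
      have : collapse rX hwX a ∈ collapse rY hwY b := by
        rw [← hb]; exact mem_collapse.2 ⟨a, hac, rfl⟩
      obtain ⟨b', hb', he⟩ := mem_collapse.1 this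
      exact ⟨b', he⟩
  have ex' : ∀ b, ∃ a, collapse rY hwY b = collapse rX hwX a := by
    intro b
    induction haccY b using Relation.ReflTransGen.head_induction_on with
    | refl => exact ⟨x0, h.symm⟩
    | @head b c hbc hcb ih =>
      obtain ⟨a, ha⟩ := ih
      have : collapse rY hwY b ∈ collapse rX hwX a := by
        rw [← ha]; exact mem_collapse.2 ⟨b, hbc, rfl⟩
      obtain ⟨a', ha', he⟩ := mem_collapse.1 this
      exact ⟨a', he⟩
  choose f hfc using ex
  choose g hgc using ex'
  have hgf : ∀ a, g (f a) = a := fun a =>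
    collapse_inj hextX (show collapse rX hwX (g (f a)) = collapse rX hwX a by
      rw [← hgc (f a), ← hfc a])
  have hfg : ∀ b, f (g b) = b := fun b =>
    collapse_inj hextY (show collapse rY hwY (f (g b)) = collapse rY hwY b by
      rw [← hfc (g b), ← hgc b])
  have hrel : ∀ a b, rX a b ↔ rY (f a) (f b) := by
    intro a b
    constructor
    · intro hab
      have : collapse rX hwX a ∈ collapse rY hwY (f b) := by
        rw [← hfc b]; exact mem_collapse.2 ⟨a, hab, rfl⟩
      obtain ⟨b', hb', he⟩ := mem_collapse.1 this
      have : f a = b' := collapse_inj hextY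
        (show collapse rY hwY (f a) = collapse rY hwY b' by rw [← hfc a, he])
      rwa [this]
    · intro hab
      have : collapse rX hwX a ∈ collapse rX hwX b := by
        rw [hfc a, hfc b]
        exact mem_collapse.2 ⟨f a, hab, rfl⟩
      obtain ⟨a', ha', he⟩ := mem_collapse.1 this
      have : a = a' := collapse_inj hextX he
      rwa [this]
  have hroot : f x0 = y0 := collapse_inj hextY
    (show collapse rY hwY (f x0) = collapse rY hwY y0 by rw [← hfc x0, h])
  exact ⟨⟨f, g, hgf, hfg⟩, hrel, hroot⟩

theorem WEApg.wf' (X : WEApg.{u}) : WellFounded X.rel := isWFRel_iff.1 X.wf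

noncomputable def WEApg.set (X : WEApg.{u}) : ZFSet.{u} :=
  collapse X.rel X.wf' X.root

def WEApg.below (X : WEApg.{u}) (x : X.carrier) : WEApg.{u} where
  carrier := Below X.rel x
  rel := belowRel X.rel x
  root := belowRoot X.rel x
  acc := below_acc
  wf := isWFRel_iff.2 (below_wf X.wf' x)
  ext := below_ext X.ext x

theorem WEApg.set_below (X : WEApg.{u}) (x : X.carrier) :
    (X.below x).set = collapse X.rel X.wf' x := by
  have := collapse_below (hw := X.wf') (x := x) (belowRoot X.rel x)
  simpa [WEApg.set, WEApg.below, belowRoot] using this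

theorem WEApg.mem_iff (Z X : WEApg.{u}) : Z.Mem X ↔ Z.set ∈ X.set := by
  constructor
  · rintro ⟨z, hz, f, hf, hroot⟩
    have h1 : collapse (belowRel X.rel z) (below_wf X.wf' z) (f Z.root)
        = collapse Z.rel Z.wf' Z.root := collapse_iso f hf Z.root
    rw [hroot] at h1
    rw [collapse_below (hw := X.wf')] at h1
    have : Z.set = collapse X.rel X.wf' z := h1.symm
    rw [WEApg.set, this]
    exact mem_collapse.2 ⟨z, hz, rfl⟩
  · intro h
    obtain ⟨z, hz, he⟩ := mem_collapse.1 h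
    refine ⟨z, hz, ?_⟩
    refine iso_of_collapse_eq (hwX := Z.wf') (hwY := below_wf X.wf' z) Z.ext (below_ext X.ext z) Z.acc below_acc ?_
    rw [show collapse Z.rel Z.wf' Z.root = Z.set from rfl, he,
      collapse_below (hw := X.wf')]
    rfl

theorem WEApg.iso_iff (Z X : WEApg.{u}) : Z.Iso X ↔ Z.set = X.set := by
  constructor
  · rintro ⟨f, hf, hroot⟩
    have := collapse_iso (hwX := Z.wf') (hwY := X.wf') f hf Z.root
    rw [hroot] at this
    exact this.symm
  · intro h
    exact iso_of_collapse_eq (hwX := Z.wf') (hwY := X.wf') Z.ext X.ext Z.acc X.acc h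

theorem WEApg.iso_refl (X : WEApg.{u}) : X.Iso X :=
  ⟨Equiv.refl _, fun _ _ => Iff.rfl, rfl⟩

theorem WEApg.realize {X : WEApg.{u}} {u' : ZFSet.{u}} (h : u' ∈ X.set) :
    ∃ Z : WEApg.{u}, Z.set = u' := by
  obtain ⟨z, hz, he⟩ := mem_collapse.1 h
  exact ⟨X.below z, by rw [X.set_below z, he]⟩

theorem succ_set {S W : WEApg.{u}} (hS : IsSuccOf S W) :
    S.set = insert W.set W.set := by
  refine ZFSet.ext fun u => ?_
  rw [ZFSet.mem_insert_iff]
  constructor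
  · intro h
    obtain ⟨Z, hZ⟩ := WEApg.realize h
    have hm : Z.Mem S := (WEApg.mem_iff Z S).2 (hZ ▸ h)
    rcases (hS Z).1 hm with h' | h'
    · exact Or.inr (hZ ▸ (WEApg.mem_iff Z W).1 h')
    · exact Or.inl (hZ ▸ (WEApg.iso_iff Z W).1 h')
  · rintro (h | h)
    · have : W.Mem S := (hS W).2 (Or.inr (WEApg.iso_refl W))
      rw [h]
      exact (WEApg.mem_iff W S).1 this
    · obtain ⟨Z, hZ⟩ := WEApg.realize h
      have : Z.Mem S := (hS Z).2 (Or.inl ((WEApg.mem_iff Z W).2 (hZ ▸ h)))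
      exact hZ ▸ (WEApg.mem_iff Z S).1 this

def OmR : Option (ULift.{u} ℕ) → Option (ULift.{u} ℕ) → Prop
  | some m, some n => m.down < n.down
  | some _, none => True
  | none, _ => False

theorem omR_acc_some : ∀ (n : ℕ) (m : ULift.{u} ℕ), m.down = n → Acc OmR (some m) := by
  intro n
  induction n using Nat.strong_induction_on with
  | _ n ih =>
    intro m hm
    refine Acc.intro _ fun y hy => ?_
    match y with
    | none => exact absurd hy (by simp [OmR])
    | some k =>
      have hk : k.down < n := hm ▸ hy
      exact ih k.down hk k rfl

theorem omWf : WellFounded (OmR.{u}) := by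
  refine ⟨fun x => ?_⟩
  match x with
  | some m => exact omR_acc_some m.down m rfl
  | none =>
    refine Acc.intro _ fun y hy => ?_
    match y with
    | some m => exact omR_acc_some m.down m rfl
    | none => exact absurd hy (by simp [OmR])

theorem omExt : IsExtRel (OmR.{u}) := by
  intro a b h
  match a, b with
  | none, none => rfl
  | some m, some n =>
    congr 1
    cases m; cases n
    simp only [ULift.up_inj]
    rename_i m n
    rcases Nat.lt_trichotomy m n with hlt | heq | hgt
    · exact absurd ((h (some ⟨m⟩)).2 hlt) (by simp [OmR])
    · exact heq
    · exact absurd ((h (some ⟨n⟩)).1 hgt) (by simp [OmR])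
  | some m, none =>
    exact absurd ((h (some m)).2 trivial) (by simp [OmR])
  | none, some n =>
    exact absurd ((h (some n)).1 trivial) (by simp [OmR])

theorem omAcc : ∀ x, Relation.ReflTransGen (OmR.{u}) x none := by
  intro x
  match x with
  | none => exact Relation.ReflTransGen.refl
  | some m => exact Relation.ReflTransGen.single trivial

def OmegaApg : WEApg.{u} :=
  ⟨Option (ULift.{u} ℕ), OmR, none, omAcc, isWFRel_iff.2 omWf, omExt⟩

noncomputable def vN (n : ℕ) : ZFSet.{u} := collapse OmR omWf (some ⟨n⟩)

theorem omega_set : (OmegaApg.{u}).set = collapse OmR omWf none := rfl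

theorem mem_omega_set {u' : ZFSet.{u}} :
    u' ∈ (OmegaApg.{u}).set ↔ ∃ n, u' = vN n := by
  rw [omega_set, mem_collapse]
  constructor
  · rintro ⟨y, hy, he⟩
    match y with
    | some m => exact ⟨m.down, he⟩
    | none => exact absurd hy (by simp [OmR])
  · rintro ⟨n, he⟩
    exact ⟨some ⟨n⟩, trivial, he⟩

theorem not_mem_vN_zero (u' : ZFSet.{u}) : u' ∉ vN.{u} 0 := by
  intro h
  obtain ⟨y, hy, _⟩ := mem_collapse.1 h
  match y with
  | some m => exact absurd hy (by simp [OmR])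
  | none => exact hy

theorem vN_succ (n : ℕ) : vN.{u} (n + 1) = insert (vN.{u} n) (vN.{u} n) := by
  refine ZFSet.ext fun u' => ?_
  rw [ZFSet.mem_insert_iff, vN, mem_collapse]
  constructor
  · rintro ⟨y, hy, he⟩
    match y with
    | none => exact absurd hy (by simp [OmR])
    | some m =>
      have hm : m.down < n + 1 := hy
      rcases Nat.lt_succ_iff_lt_or_eq.1 hm with h' | h'
      · refine Or.inr (mem_collapse.2 ⟨some m, h', ?_⟩)
        exact he
      · refine Or.inl ?_
        rw [he, vN]
        congr 2
        cases m
        simpa using h'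
  · rintro (h | h)
    · exact ⟨some ⟨n⟩, Nat.lt_succ_self n, h⟩
    · obtain ⟨y, hy, he⟩ := mem_collapse.1 h
      match y with
      | none => exact absurd hy (by simp [OmR])
      | some m => exact ⟨some m, Nat.lt_succ_of_lt hy, he⟩


/-- The axiom of infinity holds for well-founded extensional apgs. -/
theorem weapg_infinity :
    ∃ Omega : WEApg.{u},
      (∃ W : WEApg.{u}, W.Mem Omega ∧ ∀ Z : WEApg.{u}, ¬ Z.Mem W) ∧
      (∀ W S : WEApg.{u}, W.Mem Omega → IsSuccOf S W → S.Mem Omega) ∧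
      (∀ T : WEApg.{u},
        ((∀ W : WEApg.{u}, (∀ Z : WEApg.{u}, ¬ Z.Mem W) → W.Mem T) ∧
         (∀ W S : WEApg.{u}, W.Mem T → IsSuccOf S W → S.Mem T)) →
        ∀ W : WEApg.{u}, W.Mem Omega → W.Mem T) := by
  refine ⟨OmegaApg.{u}, ⟨OmegaApg.below (some ⟨0⟩), ?_, ?_⟩, ?_, ?_⟩
  · rw [WEApg.mem_iff, WEApg.set_below OmegaApg.{u} (some ⟨0⟩)]
    exact mem_omega_set.2 ⟨0, rfl⟩
  · intro Z hZ
    rw [WEApg.mem_iff, WEApg.set_below OmegaApg.{u} (some ⟨0⟩)] at hZ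
    exact not_mem_vN_zero Z.set hZ
  · intro W S hW hS
    rw [WEApg.mem_iff] at hW ⊢
    obtain ⟨n, hn⟩ := mem_omega_set.1 hW
    have : S.set = vN (n + 1) := by rw [succ_set hS, hn, vN_succ]
    rw [this]
    exact mem_omega_set.2 ⟨n + 1, rfl⟩
  · rintro T ⟨h0, hsucc⟩ W hW
    rw [WEApg.mem_iff] at hW
    obtain ⟨n, hn⟩ := mem_omega_set.1 hW
    clear hW
    induction n generalizing W with
    | zero =>
      refine h0 W fun Z hZ => ?_
      rw [WEApg.mem_iff, hn] at hZ
      exact not_mem_vN_zero Z.set hZ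
    | succ n ih =>
      have hW' : (OmegaApg.{u}.below (some ⟨n⟩)).set = vN n := WEApg.set_below _ _
      have hmemT : (OmegaApg.{u}.below (some ⟨n⟩)).Mem T := ih _ hW'
      refine hsucc _ W hmemT ?_
      intro Z
      rw [WEApg.mem_iff, WEApg.mem_iff, WEApg.iso_iff, hn, hW', vN_succ,
        ZFSet.mem_insert_iff]
      tauto
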